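/- Given a Hilbert space H = H_1 ⊗ ⋯ ⊗ H_n with dim H_j = d_j, suppose there exists a family of subspaces V_1, …, V_m with V_i = V_i^{loc} ⊗ H_{[n]\N(i)} (each V_i^{loc} ⊆ H_{N(i)}) of relative dimensions r_1, …, r_m whose sum is all of H. Then for any dimension vector d' with each d'_j a multiple of d_j, there exist subspaces V'_1, …, V'_m of the same form (conforming to the same bipartite graph, with the same relative dimensions r_i) on qudits of dimensions d' whose sum is the whole space. -/

import Mathlib

open Module

noncomputable section

/-- `V` conforms to the qudit neighborhood `N`: viewing `(∀ j, Fin (d j)) → ℂ` as the tensor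
product of the qudits `ℂ^{d j}`, `V` has the form `W ⊗ (full space on the other qudits)`,
i.e. there is a subspace `W` of the function space on the coordinates in `N` such that `V`
consists exactly of those functions all of whose slices (obtained by fixing the coordinates
outside `N`) lie in `W`. -/
def Conforms {n : ℕ} (d : Fin n → ℕ) (N : Finset (Fin n))
    (V : Submodule ℂ ((∀ j, Fin (d j)) → ℂ)) : Prop :=
  ∃ W : Submodule ℂ ((∀ j : {j // j ∈ N}, Fin (d j.1)) → ℂ),
    ∀ f, f ∈ V ↔ ∀ y : ∀ j : {j // j ∉ N}, Fin (d j.1),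
      (fun x : ∀ j : {j // j ∈ N}, Fin (d j.1) =>
        f (fun j => if h : j ∈ N then x ⟨j, h⟩ else y ⟨j, h⟩)) ∈ W

section AuxDefs

variable {n : ℕ} {d k d' : Fin n → ℕ} (e : ∀ j, Fin (d' j) ≃ Fin (d j) × Fin (k j))

/-- Combine a `d`-coordinate and a slice index into a `d'`-coordinate. -/
def sfmPhi (s : ∀ j, Fin (k j)) (x : ∀ j, Fin (d j)) : ∀ j, Fin (d' j) :=
  fun j => (e j).symm (x j, s j)

/-- Linear "currying" equivalence between functions on the large coordinates and
families (indexed by the slices) of functions on the small coordinates. -/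
def sfmCurry : ((∀ j, Fin (d' j)) → ℂ) ≃ₗ[ℂ]
    ((∀ j, Fin (k j)) → ((∀ j, Fin (d j)) → ℂ)) where
  toFun f := fun s x => f (sfmPhi e s x)
  map_add' _ _ := rfl
  map_smul' _ _ := rfl
  invFun g := fun z => g (fun j => (e j (z j)).2) (fun j => (e j (z j)).1)
  left_inv f := by
    funext z
    show f (sfmPhi e _ _) = f z
    congr 1
    funext j
    simp [sfmPhi]
  right_inv g := by
    funext s x
    simp [sfmPhi]

/-- The enlarged subspace: all functions whose every slice lies in `V`. -/
def sfmNew (V : Submodule ℂ ((∀ j, Fin (d j)) → ℂ)) :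
    Submodule ℂ ((∀ j, Fin (d' j)) → ℂ) :=
  ⨅ s : ∀ j, Fin (k j), V.comap (LinearMap.funLeft ℂ ℂ (sfmPhi e s))

lemma mem_sfmNew {V : Submodule ℂ ((∀ j, Fin (d j)) → ℂ)}
    {f : (∀ j, Fin (d' j)) → ℂ} :
    f ∈ sfmNew e V ↔ ∀ s : ∀ j, Fin (k j), (fun x => f (sfmPhi e s x)) ∈ V := by
  simp [sfmNew, Submodule.mem_iInf, Submodule.mem_comap, LinearMap.funLeft,
    Function.comp_def]

lemma sfmNew_eq_comap (V : Submodule ℂ ((∀ j, Fin (d j)) → ℂ)) :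
    sfmNew e V = Submodule.comap (sfmCurry e).toLinearMap
      (Submodule.pi Set.univ fun _ : ∀ j, Fin (k j) => V) := by
  ext f
  simp [mem_sfmNew, Submodule.mem_comap, Submodule.mem_pi, sfmCurry]

end AuxDefs

section PiSub

variable {R : Type*} {ι : Type*} [Semiring R] {φ : ι → Type*}
  [∀ i, AddCommMonoid (φ i)] [∀ i, Module R (φ i)]

/-- `Submodule.pi Set.univ p` is linearly equivalent to the product of the `p i`. -/
def piSubEquiv (p : ∀ i, Submodule R (φ i)) :
    (Submodule.pi Set.univ p) ≃ₗ[R] ∀ i, p i where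
  toFun x i := ⟨x.1 i, x.2 i trivial⟩
  map_add' _ _ := rfl
  map_smul' _ _ := rfl
  invFun x := ⟨fun i => x i, fun i _ => (x i).2⟩
  left_inv _ := rfl
  right_inv _ := rfl

end PiSub

section RankSpan

variable {n : ℕ} {d k d' : Fin n → ℕ} (e : ∀ j, Fin (d' j) ≃ Fin (d j) × Fin (k j))

lemma finrank_sfmNew (V : Submodule ℂ ((∀ j, Fin (d j)) → ℂ)) :
    finrank ℂ (sfmNew e V) = (∏ j, k j) * finrank ℂ V := by
  rw [sfmNew_eq_comap]
  rw [show (sfmCurry e).toLinearMap = ((sfmCurry e : ((∀ j, Fin (d' j)) → ℂ) ≃ₗ[ℂ]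
      ((∀ j, Fin (k j)) → ((∀ j, Fin (d j)) → ℂ))) : _ →ₗ[ℂ] _) from rfl,
    Submodule.comap_equiv_eq_map_symm, LinearEquiv.finrank_map_eq,
    (piSubEquiv _).finrank_eq, finrank_pi_fintype, Finset.sum_const, Finset.card_univ,
    smul_eq_mul, Fintype.card_pi]
  simp

lemma iSup_sfmNew {m : ℕ} (V : Fin m → Submodule ℂ ((∀ j, Fin (d j)) → ℂ))
    (h : (⨆ i, V i) = ⊤) : (⨆ i, sfmNew e (V i)) = ⊤ := by
  classical
  have key : (⨆ i, Submodule.pi Set.univ fun _ : ∀ j, Fin (k j) => V i) = ⊤ := by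
    rw [eq_top_iff]
    rintro g -
    rw [← Finset.univ_sum_single g]
    refine Submodule.sum_mem _ fun s _ => ?_
    have hg : g s ∈ ⨆ i, V i := by rw [h]; trivial
    refine Submodule.iSup_induction (motive := fun v =>
        Pi.single s v ∈ ⨆ i, Submodule.pi Set.univ fun _ : ∀ j, Fin (k j) => V i)
      V hg (fun i x hx => ?_) ?_ (fun x y hx hy => ?_)
    · refine le_iSup (fun i => Submodule.pi Set.univ fun _ : ∀ j, Fin (k j) => V i) i ?_
      have h3 := Submodule.le_comap_single_pi (fun _ : ∀ j, Fin (k j) => V i) (I := Set.univ) (i := s) hx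
      rw [Submodule.mem_comap, LinearMap.coe_single] at h3
      exact h3
    · show Pi.single (M := fun _ : ∀ j, Fin (k j) => ((j : Fin n) → Fin (d j)) → ℂ) s (0 : ((j : Fin n) → Fin (d j)) → ℂ) ∈ _
      rw [Pi.single_zero]
      exact Submodule.zero_mem _
    · show Pi.single (M := fun _ : ∀ j, Fin (k j) => ((j : Fin n) → Fin (d j)) → ℂ) s (x + y) ∈ _
      rw [Pi.single_add]
      exact Submodule.add_mem _ hx hy
  have h2 : (⨆ i, sfmNew e (V i)) =
      Submodule.map (sfmCurry e).symm.toLinearMap (⨆ i, Submodule.pi Set.univ fun _ => V i) := by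
    rw [Submodule.map_iSup]
    refine iSup_congr fun i => ?_
    rw [sfmNew_eq_comap]
    exact (Submodule.comap_equiv_eq_map_symm _ _)
  rw [h2, key, Submodule.map_top]
  exact LinearEquiv.range _

lemma conforms_sfmNew {N : Finset (Fin n)} {V : Submodule ℂ ((∀ j, Fin (d j)) → ℂ)}
    (h : Conforms d N V) : Conforms d' N (sfmNew e V) := by
  classical
  obtain ⟨W, hW⟩ := h
  refine ⟨⨅ sN : ∀ j : {j // j ∈ N}, Fin (k j.1),
    W.comap (LinearMap.funLeft ℂ ℂ
      (fun (x : ∀ j : {j // j ∈ N}, Fin (d j.1)) (j : {j // j ∈ N}) =>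
        (e j.1).symm (x j, sN j))), fun f => ?_⟩
  constructor
  · intro hf y'
    rw [mem_sfmNew] at hf
    rw [Submodule.mem_iInf]
    intro sN
    rw [Submodule.mem_comap]
    have hs := (hW _).mp (hf (fun j => if hj : j ∈ N then sN ⟨j, hj⟩
        else (e j (y' ⟨j, hj⟩)).2)) (fun j : {j // j ∉ N} => (e j.1 (y' j)).1)
    have heq : (LinearMap.funLeft ℂ ℂ
        (fun (x : ∀ j : {j // j ∈ N}, Fin (d j.1)) (j : {j // j ∈ N}) =>
          (e j.1).symm (x j, sN j)))
        (fun x : ∀ j : {j // j ∈ N}, Fin (d' j.1) =>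
          f fun j => if h : j ∈ N then x ⟨j, h⟩ else y' ⟨j, h⟩) =
        (fun x : ∀ j : {j // j ∈ N}, Fin (d j.1) =>
          (fun x0 => f (sfmPhi e (fun j => if hj : j ∈ N then sN ⟨j, hj⟩
            else (e j (y' ⟨j, hj⟩)).2) x0))
          (fun j => if h : j ∈ N then x ⟨j, h⟩
            else (e j (y' (⟨j, h⟩ : {j // j ∉ N}))).1)) := by
      funext x
      rw [LinearMap.funLeft_apply]
      show f _ = f _
      congr 1
      funext j
      by_cases hj : j ∈ N
      · simp [hj, sfmPhi]
      · simp [hj, sfmPhi]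
    rw [heq]
    exact hs
  · intro hf
    rw [mem_sfmNew]
    intro s
    rw [hW]
    intro y
    have hs := hf (fun j : {j // j ∉ N} => (e j.1).symm (y j, s j.1))
    rw [Submodule.mem_iInf] at hs
    have hs2 := hs (fun j : {j // j ∈ N} => s j.1)
    rw [Submodule.mem_comap] at hs2
    have heq : (fun x : ∀ j : {j // j ∈ N}, Fin (d j.1) =>
        (fun x0 => f (sfmPhi e s x0))
          (fun j => if h : j ∈ N then x ⟨j, h⟩ else y ⟨j, h⟩)) =
        (LinearMap.funLeft ℂ ℂ
          (fun (x : ∀ j : {j // j ∈ N}, Fin (d j.1)) (j : {j // j ∈ N}) =>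
            (e j.1).symm (x j, (fun j : {j // j ∈ N} => s j.1) j)))
          (fun x : ∀ j : {j // j ∈ N}, Fin (d' j.1) =>
            f fun j => if h : j ∈ N then x ⟨j, h⟩
              else (e j).symm (y (⟨j, h⟩ : {j // j ∉ N}), s j)) := by
      funext x
      rw [LinearMap.funLeft_apply]
      show f _ = f _
      congr 1
      funext j
      by_cases hj : j ∈ N
      · simp [hj, sfmPhi]
      · simp [hj, sfmPhi]
    rw [heq]
    exact hs2

end RankSpan

theorem spanning_family_of_multiple_dims {m n : ℕ} (vbl : Fin m → Finset (Fin n))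
    (d d' : Fin n → ℕ) (hd : ∀ j, 0 < d j) (hd' : ∀ j, 0 < d' j)
    (hdvd : ∀ j, d j ∣ d' j) (r : Fin m → ℝ)
    (V : Fin m → Submodule ℂ ((∀ j, Fin (d j)) → ℂ))
    (hconf : ∀ i, Conforms d (vbl i) (V i))
    (hrank : ∀ i, (finrank ℂ (V i) : ℝ) = r i * ∏ j, (d j : ℝ))
    (hspan : (⨆ i, V i) = ⊤) :
    ∃ V' : Fin m → Submodule ℂ ((∀ j, Fin (d' j)) → ℂ),
      (∀ i, Conforms d' (vbl i) (V' i)) ∧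
      (∀ i, (finrank ℂ (V' i) : ℝ) = r i * ∏ j, (d' j : ℝ)) ∧
      (⨆ i, V' i) = ⊤ := by
  classical
  have hdk : ∀ j, d' j = d j * (d' j / d j) := fun j => (Nat.mul_div_cancel' (hdvd j)).symm
  let e : ∀ j, Fin (d' j) ≃ Fin (d j) × Fin (d' j / d j) :=
    fun j => (finCongr (hdk j)).trans finProdFinEquiv.symm
  refine ⟨fun i => sfmNew e (V i), fun i => conforms_sfmNew e (hconf i), fun i => ?_,
    iSup_sfmNew e V hspan⟩
  rw [finrank_sfmNew]
  have hprod : (∏ j, (d' j : ℝ)) = (∏ j, (d j : ℝ)) * ∏ j, ((d' j / d j : ℕ) : ℝ) := by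
    rw [← Finset.prod_mul_distrib]
    refine Finset.prod_congr rfl fun j _ => ?_
    conv_lhs => rw [hdk j]
    push_cast
    ring
  rw [hprod]
  push_cast
  rw [hrank i]
  ring
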